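/- Let n > 1 be an integer and r a positive integer such that every prime factor of n is at least r. If x_1, ..., x_r ∈ ℤ/nℤ satisfy that x_i - x_j is a unit for all i ≠ j, then the number of elements w ∈ ℤ/nℤ such that w - x_i is a unit for all i ∈ {1,...,r} equals S_r(n) = ∏_{p^α ∥ n} p^(α-1)(p - r). -/

import Mathlib

open Finset

private lemma card_fiber_castHom (p α : ℕ) (hp : p.Prime) (hα : α ≠ 0) [NeZero (p ^ α)]
    (b : ZMod p) :
    (Finset.univ.filter (fun w : ZMod (p ^ α) =>
        ZMod.castHom (dvd_pow_self p hα) (ZMod p) w = b)).card = p ^ (α - 1) := by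
  haveI : Fact p.Prime := ⟨hp⟩
  set π := ZMod.castHom (dvd_pow_self p hα) (ZMod p) with hπ
  have hsurj : Function.Surjective π := by
    intro b
    exact ⟨(b.val : ZMod (p ^ α)), by simp [π, map_natCast, ZMod.natCast_zmod_val]⟩
  have hconst : ∀ b c : ZMod p,
      (univ.filter (fun w : ZMod (p ^ α) => π w = b)).card
        = (univ.filter (fun w : ZMod (p ^ α) => π w = c)).card := by
    intro b c
    obtain ⟨d, hd⟩ := hsurj (b - c)
    apply Finset.card_bij (fun w _ => w - d)
    · intro w hw
      simp only [mem_filter, mem_univ, true_and] at hw ⊢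
      rw [map_sub, hw, hd]; ring
    · intro w _ w' _ h
      exact sub_left_injective h
    · intro w hw
      refine ⟨w + d, ?_, by ring⟩
      simp only [mem_filter, mem_univ, true_and] at hw ⊢
      rw [map_add, hw, hd]; ring
  have htotal : ∑ c : ZMod p, (univ.filter (fun w : ZMod (p ^ α) => π w = c)).card
      = p ^ α := by
    rw [← Finset.card_eq_sum_card_fiberwise (fun w _ => mem_univ (π w))]
    simp [ZMod.card]
  have hkey : p * (univ.filter (fun w : ZMod (p ^ α) => π w = b)).card = p ^ α := by
    have h2 : ∑ c : ZMod p, (univ.filter (fun w : ZMod (p ^ α) => π w = b)).card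
        = p ^ α := by
      exact (Finset.sum_congr rfl (fun c _ => hconst b c)).trans htotal
    simpa [Finset.sum_const, ZMod.card, Nat.mul_comm] using h2
  have hpow : p ^ α = p * p ^ (α - 1) := by
    conv_lhs => rw [← Nat.succ_pred_eq_of_pos (Nat.pos_of_ne_zero hα)]
    rw [pow_succ, Nat.mul_comm, Nat.pred_eq_sub_one]
  exact Nat.eq_of_mul_eq_mul_left hp.pos (hkey.trans hpow)

private lemma card_pp (p α r : ℕ) (hp : p.Prime) (hα : α ≠ 0)
    (y : Fin r → ZMod (p ^ α)) (hy : ∀ i j, i ≠ j → IsUnit (y i - y j)) :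
    Nat.card {w : ZMod (p ^ α) // ∀ i, IsUnit (w - y i)} = p ^ (α - 1) * (p - r) := by
  classical
  haveI : NeZero (p ^ α) := ⟨pow_ne_zero _ hp.pos.ne'⟩
  haveI : Fact p.Prime := ⟨hp⟩
  set π := ZMod.castHom (dvd_pow_self p hα) (ZMod p) with hπ
  have hunit : ∀ z : ZMod (p ^ α), IsUnit z ↔ π z ≠ 0 := by
    intro z
    constructor
    · intro h h0
      have := h.map π
      rw [h0] at this
      exact not_isUnit_zero this
    · intro h
      have hz : ((z.val : ℕ) : ZMod (p ^ α)) = z := ZMod.natCast_zmod_val z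
      have hπz : π z = ((z.val : ℕ) : ZMod p) := by rw [← hz, map_natCast, hz]
      rw [hπz, Ne, ZMod.natCast_eq_zero_iff] at h
      rw [← hz, ZMod.isUnit_iff_coprime]
      exact Nat.Coprime.pow_right _ ((hp.coprime_iff_not_dvd.mpr h).symm)
  have hinj : Function.Injective (fun i => π (y i)) := by
    intro i j h
    by_contra hne
    have h' : π (y i) = π (y j) := h
    have := (hy i j hne).map π
    rw [map_sub, h', sub_self] at this
    exact not_isUnit_zero this
  set S : Finset (ZMod p) := Finset.univ.image (fun i => π (y i)) with hS
  have hScard : S.card = r := by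
    rw [hS, Finset.card_image_of_injective _ hinj, Finset.card_univ, Fintype.card_fin]
  have hcard : Nat.card {w : ZMod (p ^ α) // ∀ i, IsUnit (w - y i)}
      = (univ.filter (fun w : ZMod (p ^ α) => ∀ i, IsUnit (w - y i))).card := by
    rw [Nat.card_eq_fintype_card, Fintype.card_subtype]
  rw [hcard]
  have hset : univ.filter (fun w : ZMod (p ^ α) => ∀ i, IsUnit (w - y i))
      = univ.filter (fun w : ZMod (p ^ α) => π w ∈ univ \ S) := by
    apply Finset.filter_congr
    intro w _
    constructor
    · intro h
      rw [mem_sdiff]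
      refine ⟨mem_univ _, ?_⟩
      rw [hS, Finset.mem_image]
      rintro ⟨i, -, hi⟩
      have := (hunit (w - y i)).mp (h i)
      rw [map_sub, sub_ne_zero] at this
      exact this hi.symm
    · intro h i
      rw [hunit, map_sub, sub_ne_zero]
      intro he
      rw [mem_sdiff, hS, Finset.mem_image] at h
      exact h.2 ⟨i, mem_univ i, he.symm⟩
  rw [hset]
  rw [Finset.card_eq_sum_card_fiberwise
    (f := fun w : ZMod (p ^ α) => π w) (t := univ \ S)
    (s := univ.filter (fun w : ZMod (p ^ α) => π w ∈ univ \ S))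
    (fun w hw => (mem_filter.mp hw).2)]
  have heach : ∀ b ∈ univ \ S,
      ((univ.filter (fun w : ZMod (p ^ α) => π w ∈ univ \ S)).filter
        (fun w => π w = b)).card = p ^ (α - 1) := by
    intro b hb
    rw [Finset.filter_filter]
    have : (univ.filter (fun w : ZMod (p ^ α) => π w ∈ univ \ S ∧ π w = b))
        = univ.filter (fun w : ZMod (p ^ α) => π w = b) := by
      apply Finset.filter_congr
      intro w _
      constructor
      · exact fun h => h.2
      · exact fun h => ⟨h ▸ hb, h⟩
    rw [this]
    exact card_fiber_castHom p α hp hα b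
  rw [Finset.sum_congr rfl heach, Finset.sum_const, smul_eq_mul,
    Finset.card_sdiff_of_subset (Finset.subset_univ S), Finset.card_univ, ZMod.card, hScard,
    Nat.mul_comm]

theorem card_common_unit_diff (n r : ℕ) (hn : 1 < n) (hr : 0 < r)
    (hmin : ∀ p : ℕ, p.Prime → p ∣ n → r ≤ p)
    (x : Fin r → ZMod n) (hx : ∀ i j, i ≠ j → IsUnit (x i - x j)) :
    Nat.card {w : ZMod n // ∀ i, IsUnit (w - x i)} =
      ∏ p ∈ n.primeFactors, p ^ (n.factorization p - 1) * (p - r) := by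
  classical
  have hn0 : n ≠ 0 := by omega
  set s := n.primeFactors with hs
  set a : s → ℕ := fun q => (q : ℕ) ^ n.factorization q with ha
  have hcop : Pairwise (Function.onFun Nat.Coprime a) := by
    intro i j hij
    have hpi := Nat.prime_of_mem_primeFactors i.2
    have hpj := Nat.prime_of_mem_primeFactors j.2
    have hne : (i : ℕ) ≠ (j : ℕ) := fun h => hij (Subtype.ext h)
    exact Nat.Coprime.pow _ _ ((Nat.coprime_primes hpi hpj).mpr hne)
  have hprod : ∏ q : s, a q = n := by
    rw [ha, Finset.prod_coe_sort s (fun q => q ^ n.factorization q)]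
    rw [hs, ← Nat.support_factorization]
    exact Nat.factorization_prod_pow_eq_self hn0
  have e0 := ZMod.prodEquivPi a hcop
  rw [hprod] at e0
  have piUnit : ∀ (v : ∀ q : s, ZMod (a q)), IsUnit v ↔ ∀ q, IsUnit (v q) := by
    intro v
    constructor
    · intro h q
      exact h.map (Pi.evalRingHom _ q)
    · intro h
      rw [isUnit_iff_exists_inv]
      choose g hg using fun q => (h q).exists_right_inv
      exact ⟨g, funext hg⟩
  have hunit_e0 : ∀ z : ZMod n, IsUnit z ↔ IsUnit (e0 z) := by
    intro z
    constructor
    · intro h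
      exact h.map e0.toRingHom
    · intro h
      have := h.map e0.symm.toRingHom
      simpa using this
  have e1 : {w : ZMod n // ∀ i, IsUnit (w - x i)} ≃
      {v : ∀ q : s, ZMod (a q) // ∀ q, ∀ i, IsUnit (v q - e0 (x i) q)} := by
    apply Equiv.subtypeEquiv e0.toEquiv
    intro w
    constructor
    · intro h q i
      have := ((hunit_e0 _).mp (h i))
      rw [map_sub] at this
      exact (piUnit _).mp this q
    · intro h i
      rw [hunit_e0, map_sub, piUnit]
      intro q
      exact h q i
  have e2 : {v : ∀ q : s, ZMod (a q) // ∀ q, ∀ i, IsUnit (v q - e0 (x i) q)} ≃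
      ∀ q : s, {v : ZMod (a q) // ∀ i, IsUnit (v - e0 (x i) q)} :=
    Equiv.subtypePiEquivPi (p := fun q v => ∀ i, IsUnit (v - e0 (x i) q))
  rw [Nat.card_congr (e1.trans e2), Nat.card_pi]
  have heach : ∀ q : s, Nat.card {v : ZMod (a q) // ∀ i, IsUnit (v - e0 (x i) q)}
      = (q : ℕ) ^ (n.factorization q - 1) * ((q : ℕ) - r) := by
    intro q
    have hq := Nat.prime_of_mem_primeFactors q.2
    have hα : n.factorization q ≠ 0 := by
      have hmem : (q : ℕ) ∈ n.primeFactors := hs ▸ q.2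
      exact Finsupp.mem_support_iff.mp hmem
    exact card_pp (q : ℕ) (n.factorization q) r hq hα (fun i => e0 (x i) q)
      (fun i j hij => by
        have := (hunit_e0 _).mp (hx i j hij)
        rw [map_sub] at this
        exact (piUnit _).mp this q)
  rw [Finset.prod_congr rfl (fun q _ => heach q)]
  exact Finset.prod_coe_sort s (fun p => p ^ (n.factorization p - 1) * (p - r))
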